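/- Suppose a full-feedback online learning algorithm OLA guarantees, for every input sequence of payoff vectors in [0, h̃]^k and every fixed action a*, that its expected payoff satisfies E[OLA] ≥ (1−ε)·Σ_i ũ^i_{a*} − (h̃/ε)·ln k. Then the multi-armed bandit algorithm obtained by the reduction — in each round mixing the OLA's recommended distribution α̃^i with uniform exploration via α^i_a = (1−ε)·α̃^i_a + ε/k, sampling a^i ∼ α^i, and feeding OLA the propensity-score estimates ũ^i_a = u^i_a/α^i_a if a = a^i and 0 otherwise — satisfies, for every (adaptively realizable) true payoff sequence u^1, …, u^n in [0,h]^k, E[MAB] ≥ (1−2ε)·OPT − (h·k/ε²)·ln k, where E[MAB] = Σ_i E[α^i · u^i] and OPT = max_a Σ_i u^i_a. -/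

import Mathlib

/-- The history of propensity-score payoff estimates fed to the full-feedback algorithm
`OLA` during the first `i` rounds of the bandit reduction, as a function of the true
payoffs `u` and the realized actions `ω`: in round `i` the estimate reported for action
`a` is `u^i_a / α^i_a` if `a = ω i` (where `α^i_a = (1-ε)·OLA(history)_a + ε/k` is the
actual sampling probability) and `0` otherwise. -/
noncomputable def estList (k : ℕ) (OLA : List (Fin k → ℝ) → Fin k → ℝ) (ε : ℝ)
    (u : ℕ → Fin k → ℝ) (ω : ℕ → Fin k) : ℕ → List (Fin k → ℝ)
  | 0 => []
  | (i + 1) =>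
      estList k OLA ε u ω i ++
        [fun a => if a = ω i then
            u i a / ((1 - ε) * OLA (estList k OLA ε u ω i) a + ε / k) else 0]

/-- The actual sampling distribution of the bandit reduction in round `i`:
`α^i_a = (1-ε)·α̃^i_a + ε/k`, where `α̃^i = OLA(estimate history)`. -/
noncomputable def mabDist (k : ℕ) (OLA : List (Fin k → ℝ) → Fin k → ℝ) (ε : ℝ)
    (u : ℕ → Fin k → ℝ) (ω : ℕ → Fin k) (i : ℕ) (a : Fin k) : ℝ :=
  (1 - ε) * OLA (estList k OLA ε u ω i) a + ε / k

section Aux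
variable (k : ℕ) (OLA : List (Fin k → ℝ) → Fin k → ℝ) (ε : ℝ) (u : ℕ → Fin k → ℝ)

lemma estList_congr {ω ω' : ℕ → Fin k} : ∀ i, (∀ j < i, ω j = ω' j) →
    estList k OLA ε u ω i = estList k OLA ε u ω' i
  | 0, _ => rfl
  | (i+1), H => by
    have h1 := estList_congr i (fun j hj => H j (Nat.lt_succ_of_lt hj))
    have h2 := H i (Nat.lt_succ_self i)
    simp only [estList, h1, h2]

lemma mabDist_congr {ω ω' : ℕ → Fin k} (i : ℕ) (H : ∀ j < i, ω j = ω' j) (a : Fin k) :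
    mabDist k OLA ε u ω i a = mabDist k OLA ε u ω' i a := by
  unfold mabDist
  rw [estList_congr k OLA ε u i H]

noncomputable def uhat (ω : ℕ → Fin k) (i : ℕ) (a : Fin k) : ℝ :=
  if a = ω i then u i a / mabDist k OLA ε u ω i a else 0

lemma estList_eq (ω : ℕ → Fin k) (i : ℕ) :
    estList k OLA ε u ω i = (List.range i).map (fun j => uhat k OLA ε u ω j) := by
  induction i with
  | zero => rfl
  | succ i ih =>
    rw [List.range_succ, List.map_append, ← ih]
    show estList k OLA ε u ω (i+1) = _
    rw [estList]
    congr 1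

end Aux

section Aux2
variable (k : ℕ) (OLA : List (Fin k → ℝ) → Fin k → ℝ) (ε : ℝ) (u : ℕ → Fin k → ℝ)
  (hk : 0 < k)

def extw (n : ℕ) (ω : Fin n → Fin k) : ℕ → Fin k :=
  fun j => if hj : j < n then ω ⟨j, hj⟩ else ⟨0, hk⟩

lemma extw_snoc (n : ℕ) (ω : Fin n → Fin k) (b : Fin k) :
    extw k hk (n+1) (Fin.snoc ω b) = Function.update (extw k hk n ω) n b := by
  funext j
  rcases lt_trichotomy j n with hj | hj | hj
  · have hj' : j < n + 1 := Nat.lt_succ_of_lt hj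
    have : (⟨j, hj'⟩ : Fin (n+1)) = Fin.castSucc ⟨j, hj⟩ := rfl
    rw [Function.update_of_ne (show j ≠ n from Nat.ne_of_lt hj)]
    simp only [extw, dif_pos hj', dif_pos hj]
    rw [this, Fin.snoc_castSucc]
  · subst hj
    have hj' : j < j + 1 := Nat.lt_succ_self j
    have : (⟨j, hj'⟩ : Fin (j+1)) = Fin.last j := rfl
    rw [Function.update_self]
    simp only [extw, dif_pos hj']
    rw [this, Fin.snoc_last]
  · have h1 : ¬ j < n + 1 := by omega
    have h2 : ¬ j < n := by omega
    rw [Function.update_of_ne (show j ≠ n from Nat.ne_of_gt hj)]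
    simp only [extw, dif_neg h1, dif_neg h2]

noncomputable def Pw (n : ℕ) (ω : Fin n → Fin k) : ℝ :=
  ∏ i : Fin n, mabDist k OLA ε u (extw k hk n ω) i.val (ω i)

noncomputable def Sw (n : ℕ) (g : (ℕ → Fin k) → ℝ) : ℝ :=
  ∑ ω : Fin n → Fin k, Pw k OLA ε u hk n ω * g (extw k hk n ω)

lemma Sw_succ (n : ℕ) (g : (ℕ → Fin k) → ℝ) :
    Sw k OLA ε u hk (n+1) g
      = ∑ ω : Fin n → Fin k, Pw k OLA ε u hk n ω *
          ∑ b, mabDist k OLA ε u (extw k hk n ω) n b *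
            g (Function.update (extw k hk n ω) n b) := by
  unfold Sw
  rw [← (Fin.snocEquiv (fun _ : Fin (n+1) => Fin k)).sum_comp, Fintype.sum_prod_type]
  rw [Finset.sum_comm]
  refine Finset.sum_congr rfl fun ω _ => ?_
  rw [Finset.mul_sum]
  refine Finset.sum_congr rfl fun b _ => ?_
  have hsnoc : extw k hk (n+1) (Fin.snocEquiv (fun _ : Fin (n+1) => Fin k) (b, ω))
      = Function.update (extw k hk n ω) n b := by
    have : (Fin.snocEquiv (fun _ : Fin (n+1) => Fin k) (b, ω)) = Fin.snoc ω b := rfl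
    rw [this, extw_snoc]
  have hupd : ∀ i < n, ∀ a, mabDist k OLA ε u (Function.update (extw k hk n ω) n b) i a
      = mabDist k OLA ε u (extw k hk n ω) i a := by
    intro i hi a
    refine mabDist_congr k OLA ε u i (fun j hj => ?_) a
    rw [Function.update_of_ne (by omega)]
  have hupd' : ∀ a, mabDist k OLA ε u (Function.update (extw k hk n ω) n b) n a
      = mabDist k OLA ε u (extw k hk n ω) n a := by
    intro a
    refine mabDist_congr k OLA ε u n (fun j hj => ?_) a
    rw [Function.update_of_ne (by omega)]
  have hP : Pw k OLA ε u hk (n+1) (Fin.snocEquiv (fun _ : Fin (n+1) => Fin k) (b, ω))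
      = Pw k OLA ε u hk n ω * mabDist k OLA ε u (extw k hk n ω) n b := by
    unfold Pw
    rw [show (Fin.snocEquiv (fun _ : Fin (n+1) => Fin k) (b, ω)) = Fin.snoc ω b from rfl]
    rw [Fin.prod_univ_castSucc]
    congr 1
    · refine Finset.prod_congr rfl fun i _ => ?_
      rw [Fin.snoc_castSucc]
      rw [extw_snoc]
      exact hupd i.val i.isLt (ω i)
    · rw [Fin.snoc_last, extw_snoc]
      exact hupd' b
  rw [hP, hsnoc, mul_assoc]

end Aux2

section Aux3
variable (k : ℕ) (OLA : List (Fin k → ℝ) → Fin k → ℝ) (ε : ℝ) (u : ℕ → Fin k → ℝ)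
  (hk : 0 < k)
  (hd : ∀ l : List (Fin k → ℝ), (∀ a, 0 ≤ OLA l a) ∧ ∑ a, OLA l a = 1)
  (hε : 0 < ε) (hε1 : ε < 1)

include hd hk in
lemma mabDist_sum (ω : ℕ → Fin k) (i : ℕ) : ∑ a, mabDist k OLA ε u ω i a = 1 := by
  unfold mabDist
  rw [Finset.sum_add_distrib, ← Finset.mul_sum, (hd _).2, Finset.sum_const]
  have hk' : (k : ℝ) ≠ 0 := Nat.cast_ne_zero.mpr hk.ne'
  simp only [Finset.card_univ, Fintype.card_fin, nsmul_eq_mul]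
  field_simp
  ring

include hd hε hε1 hk in
lemma mabDist_pos (ω : ℕ → Fin k) (i : ℕ) (a : Fin k) : 0 < mabDist k OLA ε u ω i a := by
  unfold mabDist
  have h1 := (hd (estList k OLA ε u ω i)).1 a
  have hk' : (0:ℝ) < k := Nat.cast_pos.mpr hk
  have : 0 < ε / k := div_pos hε hk'
  nlinarith

include hd hε hε1 hk in
lemma mabDist_lb (ω : ℕ → Fin k) (i : ℕ) (a : Fin k) : ε / k ≤ mabDist k OLA ε u ω i a := by
  unfold mabDist
  have h1 := (hd (estList k OLA ε u ω i)).1 a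
  nlinarith

include hd hε hε1 hk in
lemma Pw_nonneg (n : ℕ) (ω : Fin n → Fin k) : 0 ≤ Pw k OLA ε u hk n ω :=
  Finset.prod_nonneg fun i _ => (mabDist_pos k OLA ε u hk hd hε hε1 _ _ _).le

lemma Sw_zero (g : (ℕ → Fin k) → ℝ) : Sw k OLA ε u hk 0 g = g (fun _ => ⟨0, hk⟩) := by
  unfold Sw Pw
  rw [Fintype.sum_unique]
  have : extw k hk 0 (default : Fin 0 → Fin k) = fun _ => ⟨0, hk⟩ := by
    funext j; simp [extw]
  simp [this]

include hd hk in
lemma Sw_of_inv (m : ℕ) (g : (ℕ → Fin k) → ℝ)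
    (hg : ∀ ω b, g (Function.update ω m b) = g ω) :
    Sw k OLA ε u hk (m+1) g = Sw k OLA ε u hk m g := by
  rw [Sw_succ]
  refine Finset.sum_congr rfl fun ω _ => ?_
  congr 1
  have : ∀ b, mabDist k OLA ε u (extw k hk m ω) m b *
      g (Function.update (extw k hk m ω) m b)
      = mabDist k OLA ε u (extw k hk m ω) m b * g (extw k hk m ω) := by
    intro b; rw [hg]
  rw [Finset.sum_congr rfl fun b _ => this b, ← Finset.sum_mul,
    mabDist_sum k OLA ε u hk hd, one_mul]

include hd hk in
lemma Sw_stable (i : ℕ) (g : (ℕ → Fin k) → ℝ)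
    (hg : ∀ j, i ≤ j → ∀ ω b, g (Function.update ω j b) = g ω) :
    ∀ m, i ≤ m → Sw k OLA ε u hk m g = Sw k OLA ε u hk i g := by
  intro m
  induction m with
  | zero =>
    intro him
    have : i = 0 := by omega
    rw [this]
  | succ m ih =>
    intro him
    rcases Nat.lt_or_ge i (m+1) with hlt | hge
    · have him' : i ≤ m := by omega
      rw [Sw_of_inv k OLA ε u hk hd m g (hg m him'), ih him']
    · have : i = m + 1 := by omega
      rw [this]

include hd hk in
lemma Sw_const (m : ℕ) (c : ℝ) : Sw k OLA ε u hk m (fun _ => c) = c := by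
  rw [Sw_stable k OLA ε u hk hd 0 (fun _ => c) (fun _ _ _ _ => rfl) m (Nat.zero_le m), Sw_zero]

end Aux3

section Aux4
variable (k : ℕ) (OLA : List (Fin k → ℝ) → Fin k → ℝ) (ε : ℝ) (u : ℕ → Fin k → ℝ)
  (hk : 0 < k)
  (hd : ∀ l : List (Fin k → ℝ), (∀ a, 0 ≤ OLA l a) ∧ ∑ a, OLA l a = 1)
  (hε : 0 < ε) (hε1 : ε < 1)

noncomputable def Atil (i : ℕ) (ω : ℕ → Fin k) : ℝ :=
  ∑ a, OLA (estList k OLA ε u ω i) a * uhat k OLA ε u ω i a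

noncomputable def Bfun (i : ℕ) (ω : ℕ → Fin k) : ℝ :=
  ∑ a, OLA (estList k OLA ε u ω i) a * u i a

lemma uhat_congr {ω ω' : ℕ → Fin k} (i : ℕ) (H : ∀ j < i + 1, ω j = ω' j) (a : Fin k) :
    uhat k OLA ε u ω i a = uhat k OLA ε u ω' i a := by
  unfold uhat
  rw [H i (Nat.lt_succ_self i), mabDist_congr k OLA ε u i (fun j hj => H j (by omega)) a]

include hd hε hε1 hk in
lemma inner_eq (i : ℕ) (ω' : ℕ → Fin k) :
    ∑ b, mabDist k OLA ε u ω' i b * Atil k OLA ε u i (Function.update ω' i b)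
      = Bfun k OLA ε u i ω' := by
  have hcong : ∀ b : Fin k, ∀ m, m < i → Function.update ω' i b m = ω' m :=
    fun b m hm => Function.update_of_ne (by omega) _ _
  have step : ∀ b, Atil k OLA ε u i (Function.update ω' i b)
      = OLA (estList k OLA ε u ω' i) b * (u i b / mabDist k OLA ε u ω' i b) := by
    intro b
    unfold Atil uhat
    rw [estList_congr k OLA ε u i (hcong b)]
    have hma : ∀ a, mabDist k OLA ε u (Function.update ω' i b) i a
        = mabDist k OLA ε u ω' i a :=
      fun a => mabDist_congr k OLA ε u i (hcong b) a
    simp only [hma, Function.update_self, mul_ite, mul_zero]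
    rw [Finset.sum_ite_eq' Finset.univ b
      (fun a => OLA (estList k OLA ε u ω' i) a * (u i a / mabDist k OLA ε u ω' i a))]
    simp
  simp only [step]
  unfold Bfun
  refine Finset.sum_congr rfl fun b _ => ?_
  have hm : mabDist k OLA ε u ω' i b ≠ 0 :=
    (mabDist_pos k OLA ε u hk hd hε hε1 ω' i b).ne'
  field_simp

include hd hε hε1 hk in
lemma tower1 (n i : ℕ) (hi : i < n) :
    Sw k OLA ε u hk n (Atil k OLA ε u i) = Sw k OLA ε u hk n (Bfun k OLA ε u i) := by
  have hB : ∀ j, i ≤ j → ∀ (ω : ℕ → Fin k) b,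
      Bfun k OLA ε u i (Function.update ω j b) = Bfun k OLA ε u i ω := by
    intro j hj ω b
    have H : ∀ m, m < i → Function.update ω j b m = ω m :=
      fun m hm => Function.update_of_ne (by omega) _ _
    unfold Bfun
    rw [estList_congr k OLA ε u i H]
  have hA : ∀ j, i + 1 ≤ j → ∀ (ω : ℕ → Fin k) b,
      Atil k OLA ε u i (Function.update ω j b) = Atil k OLA ε u i ω := by
    intro j hj ω b
    have H : ∀ m, m < i → Function.update ω j b m = ω m :=
      fun m hm => Function.update_of_ne (by omega) _ _
    have H' : ∀ m, m < i + 1 → Function.update ω j b m = ω m :=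
      fun m hm => Function.update_of_ne (by omega) _ _
    unfold Atil
    rw [estList_congr k OLA ε u i H]
    refine Finset.sum_congr rfl fun a _ => ?_
    rw [uhat_congr k OLA ε u i H']
  have hB' : ∀ j, i + 1 ≤ j → ∀ (ω : ℕ → Fin k) b,
      Bfun k OLA ε u i (Function.update ω j b) = Bfun k OLA ε u i ω :=
    fun j hj => hB j (by omega)
  rw [Sw_stable k OLA ε u hk hd (i+1) _ hA n hi,
      Sw_stable k OLA ε u hk hd (i+1) _ hB' n hi,
      Sw_of_inv k OLA ε u hk hd i _ (hB i le_rfl),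
      Sw_succ]
  unfold Sw
  refine Finset.sum_congr rfl fun ω _ => ?_
  rw [inner_eq k OLA ε u hk hd hε hε1 i]

include hd hε hε1 hk in
lemma tower2 (n i : ℕ) (hi : i < n) (astar : Fin k) :
    Sw k OLA ε u hk n (fun ω => uhat k OLA ε u ω i astar) = u i astar := by
  have hA : ∀ j, i + 1 ≤ j → ∀ (ω : ℕ → Fin k) b,
      uhat k OLA ε u (Function.update ω j b) i astar = uhat k OLA ε u ω i astar := by
    intro j hj ω b
    have H' : ∀ m, m < i + 1 → Function.update ω j b m = ω m :=
      fun m hm => Function.update_of_ne (by omega) _ _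
    exact uhat_congr k OLA ε u i H' astar
  rw [Sw_stable k OLA ε u hk hd (i+1) _ hA n hi, Sw_succ]
  have inner : ∀ ω' : ℕ → Fin k,
      ∑ b, mabDist k OLA ε u ω' i b * uhat k OLA ε u (Function.update ω' i b) i astar
        = u i astar := by
    intro ω'
    have hcong : ∀ b : Fin k, ∀ m, m < i → Function.update ω' i b m = ω' m :=
      fun b m hm => Function.update_of_ne (by omega) _ _
    have step : ∀ b, uhat k OLA ε u (Function.update ω' i b) i astar
        = if astar = b then u i astar / mabDist k OLA ε u ω' i astar else 0 := by
      intro b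
      unfold uhat
      rw [Function.update_self, mabDist_congr k OLA ε u i (hcong b) astar]
    simp only [step, mul_ite, mul_zero]
    rw [Finset.sum_ite_eq Finset.univ astar
      (fun b => mabDist k OLA ε u ω' i b * (u i astar / mabDist k OLA ε u ω' i astar))]
    have hm : mabDist k OLA ε u ω' i astar ≠ 0 :=
      (mabDist_pos k OLA ε u hk hd hε hε1 ω' i astar).ne'
    rw [mul_div_cancel₀ _ hm]
    simp
  have : (∑ ω : Fin i → Fin k, Pw k OLA ε u hk i ω *
      ∑ b, mabDist k OLA ε u (extw k hk i ω) i b *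
        uhat k OLA ε u (Function.update (extw k hk i ω) i b) i astar)
      = Sw k OLA ε u hk i (fun _ => u i astar) := by
    unfold Sw
    refine Finset.sum_congr rfl fun ω _ => ?_
    rw [inner]
  rw [this, Sw_const k OLA ε u hk hd]

end Aux4

/-- If the full-feedback algorithm `OLA` guarantees
`E[OLA] ≥ (1-ε)·Σ_i ṽ^i_{a*} - (h̃/ε)·ln k` on every input sequence in `[0,h̃]^k`
(with `h̃ = k·h/ε`), then the bandit reduction — mix with uniform exploration,
sample, and feed back propensity-score estimates — satisfies
`E[MAB] ≥ (1-2ε)·OPT - (h·k/ε²)·ln k` on every true payoff sequence in `[0,h]^k`,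
where the expectation is over realized action sequences `ω` (whose probability is the
product of the round-by-round sampling probabilities). -/
theorem bandit_reduction_bound
    (k n : ℕ) (hk : 0 < k) (h ε : ℝ) (hh : 0 < h) (hε : 0 < ε) (hε1 : ε < 1)
    (OLA : List (Fin k → ℝ) → Fin k → ℝ)
    (hOLAdist : ∀ l : List (Fin k → ℝ), (∀ a, 0 ≤ OLA l a) ∧ ∑ a, OLA l a = 1)
    (hOLA : ∀ v : ℕ → Fin k → ℝ,
        (∀ i < n, ∀ a, v i a ∈ Set.Icc (0 : ℝ) (k * h / ε)) →
        ∀ astar : Fin k,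
          ∑ i ∈ Finset.range n, ∑ a, OLA ((List.range i).map v) a * v i a
            ≥ (1 - ε) * ∑ i ∈ Finset.range n, v i astar
              - (k * h / ε) / ε * Real.log k)
    (u : ℕ → Fin k → ℝ) (hu : ∀ i < n, ∀ a, u i a ∈ Set.Icc (0 : ℝ) h) :
    ∑ ω : Fin n → Fin k,
        (∏ i : Fin n,
            mabDist k OLA ε u (fun j => if hj : j < n then ω ⟨j, hj⟩ else ⟨0, hk⟩)
              i.val (ω i))
          * (∑ i : Fin n, ∑ a : Fin k,
              mabDist k OLA ε u (fun j => if hj : j < n then ω ⟨j, hj⟩ else ⟨0, hk⟩)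
                i.val a * u i.val a)
      ≥ (1 - 2 * ε) *
          (Finset.univ.sup' (Finset.univ_nonempty_iff.mpr ⟨⟨0, hk⟩⟩)
            fun a : Fin k => ∑ i ∈ Finset.range n, u i a)
        - (h * k / ε ^ 2) * Real.log k := by
  classical
  have hd := hOLAdist
  have hkR : (0:ℝ) < k := Nat.cast_pos.mpr hk
  have hkne : (k:ℝ) ≠ 0 := hkR.ne'
  set C : ℝ := k * h / ε / ε * Real.log k with hCdef
  obtain ⟨astar, -, hast⟩ := Finset.exists_mem_eq_sup'
    (Finset.univ_nonempty_iff.mpr ⟨(⟨0, hk⟩ : Fin k)⟩)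
    (fun a : Fin k => ∑ i ∈ Finset.range n, u i a)
  -- rewrite goal LHS as Sw applied to the round-payoff functional
  have hgoal : (∑ ω : Fin n → Fin k,
        (∏ i : Fin n,
            mabDist k OLA ε u (fun j => if hj : j < n then ω ⟨j, hj⟩ else ⟨0, hk⟩)
              i.val (ω i))
          * (∑ i : Fin n, ∑ a : Fin k,
              mabDist k OLA ε u (fun j => if hj : j < n then ω ⟨j, hj⟩ else ⟨0, hk⟩)
                i.val a * u i.val a))
      = Sw k OLA ε u hk n
          (fun ω' => ∑ i ∈ Finset.range n, ∑ a, mabDist k OLA ε u ω' i a * u i a) := by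
    unfold Sw Pw extw
    refine Finset.sum_congr rfl fun ω _ => ?_
    congr 1
    exact Fin.sum_univ_eq_sum_range
      (fun j => ∑ a, mabDist k OLA ε u
        (fun m => if hm : m < n then ω ⟨m, hm⟩ else ⟨0, hk⟩) j a * u j a) n
  rw [hgoal, hast]
  -- general Sw facts at level n
  have mono : ∀ g1 g2 : (ℕ → Fin k) → ℝ, (∀ ω', g1 ω' ≤ g2 ω') →
      Sw k OLA ε u hk n g1 ≤ Sw k OLA ε u hk n g2 := by
    intro g1 g2 hg
    unfold Sw
    refine Finset.sum_le_sum fun ω _ => ?_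
    exact mul_le_mul_of_nonneg_left (hg _) (Pw_nonneg k OLA ε u hk hd hε hε1 n ω)
  have hone : ∑ ω : Fin n → Fin k, Pw k OLA ε u hk n ω = 1 := by
    have h1 := Sw_const k OLA ε u hk hd n 1
    unfold Sw at h1
    simpa using h1
  have haffine : ∀ (c dd : ℝ) (g : (ℕ → Fin k) → ℝ),
      Sw k OLA ε u hk n (fun ω' => c * g ω' + dd) = c * Sw k OLA ε u hk n g + dd := by
    intro c dd g
    unfold Sw
    have e1 : ∀ ω : Fin n → Fin k,
        Pw k OLA ε u hk n ω * (c * g (extw k hk n ω) + dd)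
          = c * (Pw k OLA ε u hk n ω * g (extw k hk n ω)) + dd * Pw k OLA ε u hk n ω :=
      fun ω => by ring
    rw [Finset.sum_congr rfl fun ω _ => e1 ω, Finset.sum_add_distrib,
      ← Finset.mul_sum, ← Finset.mul_sum, hone]
    ring
  have hlin : ∀ F : ℕ → (ℕ → Fin k) → ℝ,
      Sw k OLA ε u hk n (fun ω' => ∑ i ∈ Finset.range n, F i ω')
        = ∑ i ∈ Finset.range n, Sw k OLA ε u hk n (F i) := by
    intro F
    unfold Sw
    simp_rw [Finset.mul_sum]
    exact Finset.sum_comm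
  -- Step 1: exploration costs at most a (1-ε) factor
  have step1 : (1 - ε) * Sw k OLA ε u hk n
        (fun ω' => ∑ i ∈ Finset.range n, Bfun k OLA ε u i ω')
      ≤ Sw k OLA ε u hk n
        (fun ω' => ∑ i ∈ Finset.range n, ∑ a, mabDist k OLA ε u ω' i a * u i a) := by
    have hpt : ∀ ω', (1 - ε) * ∑ i ∈ Finset.range n, Bfun k OLA ε u i ω'
        ≤ ∑ i ∈ Finset.range n, ∑ a, mabDist k OLA ε u ω' i a * u i a := by
      intro ω'
      rw [Finset.mul_sum]
      refine Finset.sum_le_sum fun i hi => ?_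
      unfold Bfun
      rw [Finset.mul_sum]
      refine Finset.sum_le_sum fun a _ => ?_
      have hu0 : 0 ≤ u i a := (hu i (Finset.mem_range.mp hi) a).1
      have hεk : 0 ≤ ε / k := (div_pos hε hkR).le
      have hO := (hd (estList k OLA ε u ω' i)).1 a
      unfold mabDist
      nlinarith [mul_nonneg hεk hu0]
    calc (1 - ε) * Sw k OLA ε u hk n
          (fun ω' => ∑ i ∈ Finset.range n, Bfun k OLA ε u i ω')
        = Sw k OLA ε u hk n
            (fun ω' => (1 - ε) * (∑ i ∈ Finset.range n, Bfun k OLA ε u i ω') + 0) := by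
          rw [haffine]; ring
      _ ≤ Sw k OLA ε u hk n
            (fun ω' => ∑ i ∈ Finset.range n, ∑ a, mabDist k OLA ε u ω' i a * u i a) := by
          refine mono _ _ fun ω' => ?_
          have := hpt ω'
          linarith
  -- Step 2: unbiasedness (tower property)
  have step2 : Sw k OLA ε u hk n (fun ω' => ∑ i ∈ Finset.range n, Bfun k OLA ε u i ω')
      = Sw k OLA ε u hk n (fun ω' => ∑ i ∈ Finset.range n, Atil k OLA ε u i ω') := by
    rw [hlin, hlin]
    refine Finset.sum_congr rfl fun i hi => ?_
    exact (tower1 k OLA ε u hk hd hε hε1 n i (Finset.mem_range.mp hi)).symm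
  -- Step 3: apply the OLA guarantee pointwise
  have step3 : Sw k OLA ε u hk n
        (fun ω' => (1 - ε) * (∑ i ∈ Finset.range n, uhat k OLA ε u ω' i astar) + (-C))
      ≤ Sw k OLA ε u hk n (fun ω' => ∑ i ∈ Finset.range n, Atil k OLA ε u i ω') := by
    refine mono _ _ fun ω' => ?_
    have hv : ∀ i < n, ∀ a, (fun i a => uhat k OLA ε u ω' i a) i a
        ∈ Set.Icc (0 : ℝ) (k * h / ε) := by
      intro i hi a
      have hm := mabDist_pos k OLA ε u hk hd hε hε1 ω' i a
      have hmlb := mabDist_lb k OLA ε u hk hd hε hε1 ω' i a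
      have hu' := hu i hi a
      constructor
      · show (0:ℝ) ≤ if a = ω' i then u i a / mabDist k OLA ε u ω' i a else 0
        split
        · exact div_nonneg hu'.1 hm.le
        · exact le_rfl
      · show (if a = ω' i then u i a / mabDist k OLA ε u ω' i a else 0) ≤ k * h / ε
        split
        · have h1 : u i a / mabDist k OLA ε u ω' i a ≤ h / (ε / k) :=
            div_le_div₀ hh.le hu'.2 (div_pos hε hkR) hmlb
          have h2 : h / (ε / k) = k * h / ε := by field_simp
          linarith [h1, h2.symm.le]
        · positivity
    have hOLA' := hOLA (fun i a => uhat k OLA ε u ω' i a) hv astar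
    have hest : ∀ i : ℕ, (List.range i).map (fun i a => uhat k OLA ε u ω' i a)
        = estList k OLA ε u ω' i := by
      intro i
      rw [estList_eq k OLA ε u ω' i]
    simp_rw [hest] at hOLA'
    unfold Atil
    linarith [hOLA']
  -- Step 4: compute the lower bound's expectation
  have step4 : Sw k OLA ε u hk n
        (fun ω' => (1 - ε) * (∑ i ∈ Finset.range n, uhat k OLA ε u ω' i astar) + (-C))
      = (1 - ε) * (∑ i ∈ Finset.range n, u i astar) - C := by
    rw [haffine (1 - ε) (-C) (fun ω' => ∑ i ∈ Finset.range n, uhat k OLA ε u ω' i astar)]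
    rw [hlin (fun i ω' => uhat k OLA ε u ω' i astar)]
    rw [Finset.sum_congr rfl fun i hi =>
      tower2 k OLA ε u hk hd hε hε1 n i (Finset.mem_range.mp hi) astar]
    ring
  -- numeric conclusion
  have hT0 : 0 ≤ ∑ i ∈ Finset.range n, u i astar :=
    Finset.sum_nonneg fun i hi => (hu i (Finset.mem_range.mp hi) astar).1
  have hC0 : 0 ≤ C := by
    rw [hCdef]
    have hlog : 0 ≤ Real.log k := Real.log_nonneg (by exact_mod_cast hk)
    positivity
  have hCeq : (h * k / ε ^ 2) * Real.log k = C := by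
    rw [hCdef]
    field_simp
  rw [ge_iff_le, hCeq]
  nlinarith [step1, step2, step3, step4, hT0, hC0, hε.le,
    mul_nonneg (mul_nonneg hε.le hε.le) hT0, mul_nonneg hε.le hC0,
    mul_le_mul_of_nonneg_left (le_trans step3 (by linarith [step2] : Sw k OLA ε u hk n (fun ω' => ∑ i ∈ Finset.range n, Atil k OLA ε u i ω') ≤ Sw k OLA ε u hk n (fun ω' => ∑ i ∈ Finset.range n, Bfun k OLA ε u i ω'))) (by linarith : (0:ℝ) ≤ 1 - ε)]
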